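/- Let T > 0, σ ≥ 0, Δ ∈ ℝ, a₁, a₂, c₂ ∈ ℝ, c₁ ≠ 0, and let h : [0,T) × ℝ → ℝ be differentiable. Define H(t,S,q) = q(S − Δ/2 − a₂) − (c₂/2)q² + h(t,q). Then, at any point (t,S,q) with 0 ≤ t < T and c₁q + a₁ > 0, H satisfies the reduced HJB equation ∂ₜH + (σ²/2)∂²_{SS}H + (S − Δ/2 − a₂ − ∂_q H − c₂∂_S H)²/(4(c₁∂_S H + a₁)) = 0 if and only if h satisfies ∂ₜh(t,q) + (∂_q h(t,q))²/(4(c₁q + a₁)) = 0. -/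

import Mathlib

/-- The ansatz `H(t,S,q) = q(S − Δ/2 − a₂) − (c₂/2)q² + h(t,q)` for the reduced HJB
equation with linear TPI and quadratic PPI. -/
noncomputable def HansatzQuad (Δ a₂ c₂ : ℝ) (h : ℝ → ℝ → ℝ) (t S q : ℝ) : ℝ :=
  q * (S - Δ / 2 - a₂) - c₂ / 2 * q ^ 2 + h t q

/-- With linear TPI and quadratic PPI, the ansatz
`H(t,S,q) = q(S − Δ/2 − a₂) − (c₂/2)q² + h(t,q)` satisfies the reduced HJB equation
`∂ₜH + (σ²/2)∂²_{SS}H + (S − Δ/2 − a₂ − ∂_q H − c₂∂_S H)²/(4(c₁∂_S H + a₁)) = 0`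
at a point with `0 ≤ t < T` and `c₁q + a₁ > 0` if and only if `h` satisfies
`∂ₜh + (∂_q h)²/(4(c₁q + a₁)) = 0` there. -/
theorem stmt_8 (T σ Δ a₁ a₂ c₁ c₂ : ℝ) (hT : 0 < T) (hσ : 0 ≤ σ) (hc₁ : c₁ ≠ 0)
    (h : ℝ → ℝ → ℝ)
    (hdiff : ∀ t ∈ Set.Ico 0 T, ∀ q : ℝ,
      DifferentiableAt ℝ (fun τ => h τ q) t ∧ DifferentiableAt ℝ (fun p => h t p) q)
    (t S q : ℝ) (ht0 : 0 ≤ t) (htT : t < T) (hpos : 0 < c₁ * q + a₁) :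
    (deriv (fun τ => HansatzQuad Δ a₂ c₂ h τ S q) t
        + σ ^ 2 / 2 * deriv (deriv (fun s => HansatzQuad Δ a₂ c₂ h t s q)) S
        + (S - Δ / 2 - a₂ - deriv (fun p => HansatzQuad Δ a₂ c₂ h t S p) q
            - c₂ * deriv (fun s => HansatzQuad Δ a₂ c₂ h t s q) S) ^ 2
          / (4 * (c₁ * deriv (fun s => HansatzQuad Δ a₂ c₂ h t s q) S + a₁)) = 0)
      ↔ deriv (fun τ => h τ q) t
          + (deriv (fun p => h t p) q) ^ 2 / (4 * (c₁ * q + a₁)) = 0 := by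
  obtain ⟨hdt, hdq⟩ := hdiff t ⟨ht0, htT⟩ q
  -- time derivative
  have h1 : deriv (fun τ => HansatzQuad Δ a₂ c₂ h τ S q) t
      = deriv (fun τ => h τ q) t := by
    unfold HansatzQuad
    rw [show (fun τ => q * (S - Δ / 2 - a₂) - c₂ / 2 * q ^ 2 + h τ q)
        = fun τ => (q * (S - Δ / 2 - a₂) - c₂ / 2 * q ^ 2) + h τ q from rfl,
      deriv_const_add]
  -- S derivative
  have h2 : deriv (fun s => HansatzQuad Δ a₂ c₂ h t s q) = fun _ => q := by
    funext s
    unfold HansatzQuad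
    have : (fun s => q * (s - Δ / 2 - a₂) - c₂ / 2 * q ^ 2 + h t q)
        = fun s => q * s + (q * (- Δ / 2 - a₂) - c₂ / 2 * q ^ 2 + h t q) := by
      funext x; ring
    rw [this, deriv_add_const]
    simpa using ((hasDerivAt_id s).const_mul q).deriv
  -- q derivative
  have h3 : deriv (fun p => HansatzQuad Δ a₂ c₂ h t S p) q
      = (S - Δ / 2 - a₂) - c₂ * q + deriv (fun p => h t p) q := by
    unfold HansatzQuad
    have hd1 : DifferentiableAt ℝ (fun p : ℝ => p * (S - Δ / 2 - a₂) - c₂ / 2 * p ^ 2) q :=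
      ((differentiable_id.mul_const _).sub
        ((differentiable_const _).mul (differentiable_pow 2))).differentiableAt
    rw [deriv_fun_add hd1 hdq]
    have d1 : deriv (fun p : ℝ => p * (S - Δ / 2 - a₂) - c₂ / 2 * p ^ 2) q
          = (S - Δ / 2 - a₂) - c₂ * q := by
        have : HasDerivAt (fun p : ℝ => p * (S - Δ / 2 - a₂) - c₂ / 2 * p ^ 2)
            ((S - Δ / 2 - a₂) - c₂ * q) q := by
          have h1' : HasDerivAt (fun p : ℝ => p * (S - Δ / 2 - a₂))
              (S - Δ / 2 - a₂) q := by
            simpa using (hasDerivAt_id q).mul_const (S - Δ / 2 - a₂)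
          have h2' : HasDerivAt (fun p : ℝ => c₂ / 2 * p ^ 2) (c₂ / 2 * (2 * q)) q := by
            have := (hasDerivAt_pow 2 q).const_mul (c₂ / 2)
            simpa using this
          have := h1'.sub h2'
          exact this.congr_deriv (by ring)
        exact this.deriv
    rw [d1]
  rw [h1, h2, h3]
  simp only [deriv_const]
  ring_nf
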